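/- arXiv:1709.01911 — 3 statements merged into one kernel-verified Lean document; each statement's English description precedes it below -/
import Mathlib

section
/- Let X be a barrelled locally convex topological vector space over ℝ, let Y be a locally convex topological vector space over ℝ, let η : [c,d] → X be a continuous map on a closed interval, and let (L_m)_{m ∈ [a,b]} be a family of continuous linear maps L_m : X → Y indexed by a closed interval such that for every x ∈ X the map m ↦ L_m x is continuous on [a,b]. Then the map (m, m') ↦ L_m(η(m')) is continuous on [a,b] × [c,d]. -/
/-- **Joint continuity lemma.**
Let `X` be a barrelled locally convex topological vector space over `ℝ`, `Y` a locally
convex topological vector space over `ℝ`, `η : [c,d] → X` a continuous map on a closed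
interval, and `(L m)_{m ∈ [a,b]}` a family of continuous linear maps `X → Y` such that
`m ↦ L m x` is continuous on `[a,b]` for every `x ∈ X`.  Then `(m, m') ↦ L m (η m')`
is continuous on `[a,b] × [c,d]`. -/
theorem joint_continuity_of_barrelled
    {X Y : Type*}
    [AddCommGroup X] [Module ℝ X] [TopologicalSpace X]
    [IsTopologicalAddGroup X] [ContinuousSMul ℝ X]
    [LocallyConvexSpace ℝ X] [BarrelledSpace ℝ X]
    [AddCommGroup Y] [Module ℝ Y] [TopologicalSpace Y]
    [IsTopologicalAddGroup Y] [ContinuousSMul ℝ Y] [LocallyConvexSpace ℝ Y]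
    (a b c d : ℝ)
    (η : ℝ → X) (hη : ContinuousOn η (Set.Icc c d))
    (L : ℝ → X →L[ℝ] Y)
    (hL : ∀ x : X, ContinuousOn (fun m => L m x) (Set.Icc a b)) :
    ContinuousOn (fun p : ℝ × ℝ => L p.1 (η p.2)) (Set.Icc a b ×ˢ Set.Icc c d) := by
  classical
  -- trivial case: empty index interval
  rcases le_or_gt a b |>.symm with hab | hab
  · have : Set.Icc a b = ∅ := Set.Icc_eq_empty_of_lt hab
    simp [this]
  -- seminorm family generating the topology of `Y`
  set q : SeminormFamily ℝ Y (AbsConvexOpenSets ℝ Y) := gaugeSeminormFamily ℝ Y with hqdef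
  have hq : WithSeminorms q := with_gaugeSeminormFamily
  -- uniform structures coming from the group structures
  letI uX : UniformSpace X := IsTopologicalAddGroup.rightUniformSpace X
  haveI : IsUniformAddGroup X := isUniformAddGroup_of_addCommGroup
  letI uY : UniformSpace Y := IsTopologicalAddGroup.rightUniformSpace Y
  haveI : IsUniformAddGroup Y := isUniformAddGroup_of_addCommGroup
  -- the family of maps indexed by `[a,b]`
  set 𝓕 : Set.Icc a b → X →L[ℝ] Y := fun i => L i with h𝓕
  -- pointwise boundedness on the compact interval via continuity
  have Hbdd : ∀ (k : AbsConvexOpenSets ℝ Y) (x : X),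
      BddAbove (Set.range fun i : Set.Icc a b => q k (𝓕 i x)) := by
    intro k x
    have hcont : ContinuousOn (fun m => q k (L m x)) (Set.Icc a b) :=
      (hq.continuous_seminorm k).comp_continuousOn (hL x)
    have hcomp : IsCompact ((fun m => q k (L m x)) '' Set.Icc a b) :=
      (isCompact_Icc).image_of_continuousOn hcont
    have : (Set.range fun i : Set.Icc a b => q k (𝓕 i x))
        ⊆ (fun m => q k (L m x)) '' Set.Icc a b := by
      rintro y ⟨i, rfl⟩
      exact ⟨i, i.2, rfl⟩
    exact hcomp.bddAbove.mono this
  -- Banach–Steinhaus: the family is (uniformly) equicontinuous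
  have Hequi : UniformEquicontinuous ((↑) ∘ 𝓕) := hq.banach_steinhaus Hbdd
  -- extract a dominating continuous seminorm for each target seminorm
  have Hdom : ∀ k : AbsConvexOpenSets ℝ Y, ∃ p : Seminorm ℝ X,
      Continuous p ∧ ∀ i : Set.Icc a b, (q k).comp (𝓕 i).toLinearMap ≤ p := by
    intro k
    have := (hq.uniformEquicontinuous_iff_exists_continuous_seminorm
      (fun i : Set.Icc a b => (𝓕 i).toLinearMap)).mp Hequi k
    simpa using this
  -- now prove joint continuity pointwise
  rintro ⟨m₀, m₀'⟩ ⟨hm₀ : m₀ ∈ Set.Icc a b, hm₀' : m₀' ∈ Set.Icc c d⟩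
  rw [ContinuousWithinAt, hq.tendsto_nhds]
  intro k ε hε
  obtain ⟨p, hpc, hpdom⟩ := Hdom k
  -- continuity of the first-variable part at `m₀`
  have h1 : ∀ᶠ mm : ℝ × ℝ in nhdsWithin (m₀, m₀') (Set.Icc a b ×ˢ Set.Icc c d),
      q k (L mm.1 (η m₀') - L m₀ (η m₀')) < ε / 2 := by
    have hc : ContinuousWithinAt (fun m => q k (L m (η m₀') - L m₀ (η m₀')))
        (Set.Icc a b) m₀ := by
      apply (hq.continuous_seminorm k).continuousAt.comp_continuousWithinAt
      exact ((hL (η m₀')) m₀ hm₀).sub continuousWithinAt_const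
    have h0 : (fun m => q k (L m (η m₀') - L m₀ (η m₀'))) m₀ < ε / 2 := by
      simpa using half_pos hε
    have := hc.eventually_lt_const h0
    have hfst : Filter.Tendsto (fun mm : ℝ × ℝ => mm.1)
        (nhdsWithin (m₀, m₀') (Set.Icc a b ×ˢ Set.Icc c d)) (nhdsWithin m₀ (Set.Icc a b)) := by
      apply Filter.Tendsto.inf continuousAt_fst
      exact Filter.tendsto_principal.mpr <|
        Filter.eventually_principal.mpr fun x hx => hx.1
    exact hfst.eventually this
  -- continuity of the second-variable part at `m₀'`, uniformly in `m`
  have h2 : ∀ᶠ mm : ℝ × ℝ in nhdsWithin (m₀, m₀') (Set.Icc a b ×ˢ Set.Icc c d),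
      p (η mm.2 - η m₀') < ε / 2 := by
    have hc : ContinuousWithinAt (fun m' => p (η m' - η m₀')) (Set.Icc c d) m₀' := by
      apply hpc.continuousAt.comp_continuousWithinAt
      exact ((hη m₀' hm₀')).sub continuousWithinAt_const
    have h0 : (fun m' => p (η m' - η m₀')) m₀' < ε / 2 := by
      simpa using half_pos hε
    have := hc.eventually_lt_const h0
    have hsnd : Filter.Tendsto (fun mm : ℝ × ℝ => mm.2)
        (nhdsWithin (m₀, m₀') (Set.Icc a b ×ˢ Set.Icc c d)) (nhdsWithin m₀' (Set.Icc c d)) := by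
      apply Filter.Tendsto.inf continuousAt_snd
      exact Filter.tendsto_principal.mpr <|
        Filter.eventually_principal.mpr fun x hx => hx.2
    exact hsnd.eventually this
  have hmem : ∀ᶠ mm : ℝ × ℝ in nhdsWithin (m₀, m₀') (Set.Icc a b ×ˢ Set.Icc c d),
      mm ∈ Set.Icc a b ×ˢ Set.Icc c d := eventually_mem_nhdsWithin
  filter_upwards [h1, h2, hmem] with mm hA hB hmm
  have hmem1 : mm.1 ∈ Set.Icc a b := hmm.1
  -- split the difference
  have key : q k (L mm.1 (η mm.2) - L m₀ (η m₀'))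
      ≤ q k (L mm.1 (η mm.2 - η m₀')) + q k (L mm.1 (η m₀') - L m₀ (η m₀')) := by
    have : L mm.1 (η mm.2) - L m₀ (η m₀')
        = L mm.1 (η mm.2 - η m₀') + (L mm.1 (η m₀') - L m₀ (η m₀')) := by
      simp [map_sub]
    rw [this]
    exact map_add_le_add _ _ _
  have hdom' : q k (L mm.1 (η mm.2 - η m₀')) ≤ p (η mm.2 - η m₀') :=
    hpdom ⟨mm.1, hmem1⟩ (η mm.2 - η m₀')
  calc q k (L mm.1 (η mm.2) - L m₀ (η m₀'))
      ≤ q k (L mm.1 (η mm.2 - η m₀')) + q k (L mm.1 (η m₀') - L m₀ (η m₀')) := key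
    _ ≤ p (η mm.2 - η m₀') + q k (L mm.1 (η m₀') - L m₀ (η m₀')) := by
        exact add_le_add_left hdom' _
    _ < ε / 2 + ε / 2 := add_lt_add hB hA
    _ = ε := add_halves ε
end

section
/- Let 𝕜 be a field, let V and W be vector spaces over 𝕜, and let f : V → W be a 𝕜-linear map. Then the kernel of the induced algebra homomorphism T(f) : T(V) → T(W) is exactly the two-sided ideal of T(V) generated by the set {ι(v) : v ∈ ker f}. -/
/-- The algebra homomorphism `T(f) : T(V) → T(W)` on tensor algebras induced by a linear
map `f : V → W`; it is the unique unital algebra homomorphism with `T(f)(ι v) = ι (f v)`. -/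
noncomputable def tensorAlgebraMap (𝕜 : Type*) {V W : Type*} [Field 𝕜]
    [AddCommGroup V] [Module 𝕜 V] [AddCommGroup W] [Module 𝕜 W] (f : V →ₗ[𝕜] W) :
    TensorAlgebra 𝕜 V →ₐ[𝕜] TensorAlgebra 𝕜 W :=
  TensorAlgebra.lift 𝕜 ((TensorAlgebra.ι 𝕜).comp f)

lemma tensorAlgebraMap_ι (𝕜 : Type*) {V W : Type*} [Field 𝕜]
    [AddCommGroup V] [Module 𝕜 V] [AddCommGroup W] [Module 𝕜 W] (f : V →ₗ[𝕜] W) (v : V) :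
    tensorAlgebraMap 𝕜 f (TensorAlgebra.ι 𝕜 v) = TensorAlgebra.ι 𝕜 (f v) := by
  simp [tensorAlgebraMap]

lemma tensorAlgebraMap_comp (𝕜 : Type*) {V W U : Type*} [Field 𝕜]
    [AddCommGroup V] [Module 𝕜 V] [AddCommGroup W] [Module 𝕜 W]
    [AddCommGroup U] [Module 𝕜 U] (f : V →ₗ[𝕜] W) (g : W →ₗ[𝕜] U) (x : TensorAlgebra 𝕜 V) :
    tensorAlgebraMap 𝕜 g (tensorAlgebraMap 𝕜 f x) = tensorAlgebraMap 𝕜 (g.comp f) x := by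
  have : (tensorAlgebraMap 𝕜 g).comp (tensorAlgebraMap 𝕜 f) = tensorAlgebraMap 𝕜 (g.comp f) := by
    apply TensorAlgebra.hom_ext
    ext v
    simp [tensorAlgebraMap_ι]
  exact DFunLike.congr_fun this x

/-- **Kernel of the induced map on tensor algebras.**
For a field `𝕜`, vector spaces `V`, `W` over `𝕜` and a `𝕜`-linear map `f : V → W`,
the kernel of the induced algebra homomorphism `T(f) : T(V) → T(W)` is exactly the
two-sided ideal of `T(V)` generated by `{ι v : v ∈ ker f}`. -/
theorem ker_tensorAlgebraMap_eq_span (𝕜 : Type*) {V W : Type*} [Field 𝕜]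
    [AddCommGroup V] [Module 𝕜 V] [AddCommGroup W] [Module 𝕜 W] (f : V →ₗ[𝕜] W) :
    ∀ x : TensorAlgebra 𝕜 V,
      tensorAlgebraMap 𝕜 f x = 0 ↔
        x ∈ TwoSidedIdeal.span
          (⇑(TensorAlgebra.ι 𝕜) '' (LinearMap.ker f : Set V)) := by
  set I := TwoSidedIdeal.span (⇑(TensorAlgebra.ι 𝕜) '' (LinearMap.ker f : Set V)) with hI
  -- construct a "generalized inverse" g : W →ₗ V with f (g (f v)) = f v
  obtain ⟨p, hp⟩ := Submodule.exists_isCompl (LinearMap.range f)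
  obtain ⟨g₀, hg₀⟩ := f.rangeRestrict.exists_rightInverse_of_surjective f.range_rangeRestrict
  set π := (LinearMap.range f).linearProjOfIsCompl p hp
  set g : W →ₗ[𝕜] V := g₀.comp π
  have hker : ∀ v : V, v - g (f v) ∈ LinearMap.ker f := by
    intro v
    have h1 : π (f v) = ⟨f v, LinearMap.mem_range_self f v⟩ :=
      Submodule.linearProjOfIsCompl_apply_left hp ⟨f v, LinearMap.mem_range_self f v⟩
    have h2 : f (g₀ ⟨f v, LinearMap.mem_range_self f v⟩) = f v := by
      have := DFunLike.congr_fun hg₀ ⟨f v, LinearMap.mem_range_self f v⟩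
      exact congrArg Subtype.val this
    simp only [LinearMap.mem_ker, map_sub, g, LinearMap.comp_apply, h1, h2, sub_self]
  set q : V →ₗ[𝕜] V := g.comp f
  -- key: x - T(q) x ∈ I for all x
  have key : ∀ x : TensorAlgebra 𝕜 V, x - tensorAlgebraMap 𝕜 q x ∈ I := by
    intro x
    induction x using TensorAlgebra.induction with
    | algebraMap r => simp
    | ι v =>
        rw [tensorAlgebraMap_ι, ← map_sub]
        exact TwoSidedIdeal.subset_span ⟨v - q v, hker v, rfl⟩
    | mul a b ha hb =>
        have : a * b - tensorAlgebraMap 𝕜 q (a * b) =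
            (a - tensorAlgebraMap 𝕜 q a) * b +
              tensorAlgebraMap 𝕜 q a * (b - tensorAlgebraMap 𝕜 q b) := by
          rw [map_mul]; noncomm_ring
        rw [this]
        exact I.add_mem (I.mul_mem_right _ _ ha) (I.mul_mem_left _ _ hb)
    | add a b ha hb =>
        have : a + b - tensorAlgebraMap 𝕜 q (a + b) =
            (a - tensorAlgebraMap 𝕜 q a) + (b - tensorAlgebraMap 𝕜 q b) := by
          rw [map_add]; abel
        rw [this]
        exact I.add_mem ha hb
  intro x
  constructor
  · intro hx
    have hq : tensorAlgebraMap 𝕜 q x = 0 := by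
      rw [show q = g.comp f from rfl, ← tensorAlgebraMap_comp, hx, map_zero]
    have := key x
    rwa [hq, sub_zero] at this
  · intro hx
    -- generators map to 0, and ker (T f) is a two-sided ideal
    rw [TwoSidedIdeal.mem_span_iff] at hx
    have h := hx (TwoSidedIdeal.mk' {y | tensorAlgebraMap 𝕜 f y = 0}
      (by simp) (fun h1 h2 => by simp_all) (fun h1 => by simp_all)
      (fun {a b} h => by simp_all) (fun {a b} h => by simp_all)) ?_
    · rwa [TwoSidedIdeal.mem_mk'] at h
    · rintro y ⟨v, hv, rfl⟩
      rw [SetLike.mem_coe, TwoSidedIdeal.mem_mk']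
      simp only [Set.mem_setOf_eq, tensorAlgebraMap_ι]
      rw [LinearMap.mem_ker.mp hv, map_zero]
end

section
/- Let V be a vector space over ℂ, let G : V × V → ℂ be a bilinear form, let D : V → V be a linear map, let λ : V → ℂ be a linear functional, and set μ := λ ∘ D. Let Γ_λ : T(V) → T(V) be the unique unital algebra homomorphism with Γ_λ(ι v) = ι v − λ(v)·1 for all v ∈ V. Then: (i) Γ_λ is an algebra automorphism, with inverse the analogous map Γ_{−λ}; (ii) Γ_λ maps the two-sided ideal I₀ generated by {ι(Dv) : v ∈ V} together with the elements ι(v)ι(w) − ι(w)ι(v) − G(v,w)·1 (v,w ∈ V) onto the two-sided ideal I_μ generated by {ι(Dv) − μ(v)·1 : v ∈ V} together with the same elements ι(v)ι(w) − ι(w)ι(v) − G(v,w)·1; (iii) consequently Γ_λ descends to an algebra isomorphism T(V)/I₀ ≅ T(V)/I_μ. -/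
variable {V : Type*} [AddCommGroup V] [Module ℂ V]

/-- `Γ_λ : T(V) → T(V)`, the unique unital algebra homomorphism with
`Γ_λ (ι v) = ι v - λ(v)·1` for all `v ∈ V`. -/
noncomputable def Gamma (l : V →ₗ[ℂ] ℂ) : TensorAlgebra ℂ V →ₐ[ℂ] TensorAlgebra ℂ V :=
  TensorAlgebra.lift ℂ
    (TensorAlgebra.ι ℂ - (Algebra.linearMap ℂ (TensorAlgebra ℂ V)).comp l)

/-- The CCR generators `ι v * ι w - ι w * ι v - G(v,w)·1`, `v, w ∈ V`. -/
def ccrSet (G : V →ₗ[ℂ] V →ₗ[ℂ] ℂ) : Set (TensorAlgebra ℂ V) :=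
  {x | ∃ v w : V, x = TensorAlgebra.ι ℂ v * TensorAlgebra.ι ℂ w
    - TensorAlgebra.ι ℂ w * TensorAlgebra.ι ℂ v
    - algebraMap ℂ (TensorAlgebra ℂ V) (G v w)}

/-- The source-free dynamical generators `ι (D v)`, `v ∈ V`. -/
def dynSet (D : V →ₗ[ℂ] V) : Set (TensorAlgebra ℂ V) :=
  {x | ∃ v : V, x = TensorAlgebra.ι ℂ (D v)}

/-- The source-dependent dynamical generators `ι (D v) - μ(v)·1`, `v ∈ V`. -/
def srcSet (D : V →ₗ[ℂ] V) (μ : V →ₗ[ℂ] ℂ) : Set (TensorAlgebra ℂ V) :=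
  {x | ∃ v : V, x = TensorAlgebra.ι ℂ (D v) - algebraMap ℂ (TensorAlgebra ℂ V) (μ v)}

/-- The defining relation of the two-sided ideal `I₀` generated by `{ι (D v)}` and the
CCR elements; `RingQuot` of this relation is `T(V)/I₀`. -/
def relZero (G : V →ₗ[ℂ] V →ₗ[ℂ] ℂ) (D : V →ₗ[ℂ] V) :
    TensorAlgebra ℂ V → TensorAlgebra ℂ V → Prop :=
  fun a b => a - b ∈ dynSet D ∪ ccrSet G

/-- The defining relation of the two-sided ideal `I_μ` generated by `{ι (D v) - μ(v)·1}`
and the CCR elements; `RingQuot` of this relation is `T(V)/I_μ`. -/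
def relMu (G : V →ₗ[ℂ] V →ₗ[ℂ] ℂ) (D : V →ₗ[ℂ] V) (μ : V →ₗ[ℂ] ℂ) :
    TensorAlgebra ℂ V → TensorAlgebra ℂ V → Prop :=
  fun a b => a - b ∈ srcSet D μ ∪ ccrSet G


lemma Gamma_ι (l : V →ₗ[ℂ] ℂ) (v : V) :
    Gamma l (TensorAlgebra.ι ℂ v)
      = TensorAlgebra.ι ℂ v - algebraMap ℂ (TensorAlgebra ℂ V) (l v) := by
  simp [Gamma]

lemma Gamma_comp (l l' : V →ₗ[ℂ] ℂ) : (Gamma l).comp (Gamma l') = Gamma (l + l') := by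
  apply TensorAlgebra.hom_ext
  ext v
  simp [Gamma_ι, sub_sub, map_sub]

lemma Gamma_zero : Gamma (0 : V →ₗ[ℂ] ℂ) = AlgHom.id ℂ _ := by
  apply TensorAlgebra.hom_ext
  ext v
  simp [Gamma_ι]

lemma Gamma_inv (l : V →ₗ[ℂ] ℂ) (x : TensorAlgebra ℂ V) :
    Gamma (-l) (Gamma l x) = x := by
  have h := Gamma_comp (-l) l
  rw [neg_add_cancel, Gamma_zero] at h
  exact congrArg (fun f => (f : TensorAlgebra ℂ V →ₐ[ℂ] TensorAlgebra ℂ V) x) h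

lemma shift_comm (x y : TensorAlgebra ℂ V) (r s : ℂ) :
    (x - algebraMap ℂ _ r) * (y - algebraMap ℂ _ s)
      - (y - algebraMap ℂ _ s) * (x - algebraMap ℂ _ r) = x * y - y * x := by
  simp only [sub_mul, mul_sub]
  rw [Algebra.commutes r y, Algebra.commutes s x,
    Algebra.commutes r (algebraMap ℂ (TensorAlgebra ℂ V) s)]
  abel

lemma Gamma_ccr (l : V →ₗ[ℂ] ℂ) (G : V →ₗ[ℂ] V →ₗ[ℂ] ℂ) {x : TensorAlgebra ℂ V}
    (hx : x ∈ ccrSet G) : Gamma l x = x := by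
  obtain ⟨v, w, rfl⟩ := hx
  simp only [map_sub, map_mul, Gamma_ι, AlgHom.commutes]
  rw [shift_comm]

/-- **The shift automorphism `Γ_λ` and the source ideals.**
With `μ := λ ∘ D`: (i) `Γ_λ` is an algebra automorphism with inverse `Γ_{-λ}`;
(ii) `Γ_λ` maps the two-sided ideal `I₀` (generated by `{ι (D v)}` and the CCR elements)
onto the two-sided ideal `I_μ` (generated by `{ι (D v) - μ(v)·1}` and the CCR elements);
(iii) consequently `Γ_λ` descends to an algebra isomorphism `T(V)/I₀ ≃ T(V)/I_μ`. -/
theorem gamma_automorphism_maps_ideal_and_descends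
    (G : V →ₗ[ℂ] V →ₗ[ℂ] ℂ) (D : V →ₗ[ℂ] V) (l : V →ₗ[ℂ] ℂ)
    (μ : V →ₗ[ℂ] ℂ) (hμ : μ = l.comp D) :
    (Function.Bijective (Gamma l) ∧
      (∀ x : TensorAlgebra ℂ V, Gamma (-l) (Gamma l x) = x ∧ Gamma l (Gamma (-l) x) = x)) ∧
    ⇑(Gamma l) '' (TwoSidedIdeal.span (dynSet D ∪ ccrSet G) : Set (TensorAlgebra ℂ V))
      = (TwoSidedIdeal.span (srcSet D μ ∪ ccrSet G) : Set (TensorAlgebra ℂ V)) ∧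
    ∃ e : RingQuot (relZero G D) ≃ₐ[ℂ] RingQuot (relMu G D μ),
      ∀ x : TensorAlgebra ℂ V,
        e (RingQuot.mkAlgHom ℂ (relZero G D) x)
          = RingQuot.mkAlgHom ℂ (relMu G D μ) (Gamma l x) := by
  classical
  subst hμ
  set f := Gamma l with hf
  set g := Gamma (-l) with hg
  have hfg : ∀ x, g (f x) = x := fun x => Gamma_inv l x
  have hgf : ∀ x, f (g x) = x := by
    intro x
    have := Gamma_inv (-l) x
    rwa [neg_neg] at this
  -- generator facts
  have hS : ∀ x ∈ dynSet D ∪ ccrSet G, f x ∈ srcSet D (l.comp D) ∪ ccrSet G := by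
    rintro x (⟨v, rfl⟩ | hx)
    · exact Or.inl ⟨v, by simp [hf, Gamma_ι]⟩
    · exact Or.inr (by rw [hf, Gamma_ccr l G hx]; exact hx)
  have hT : ∀ x ∈ srcSet D (l.comp D) ∪ ccrSet G, g x ∈ dynSet D ∪ ccrSet G := by
    rintro x (⟨v, rfl⟩ | hx)
    · refine Or.inl ⟨v, ?_⟩
      simp [hg, Gamma_ι, sub_sub]
    · exact Or.inr (by rw [hg, Gamma_ccr (-l) G hx]; exact hx)
  refine ⟨⟨Function.bijective_iff_has_inverse.mpr ⟨g, hfg, hgf⟩,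
      fun x => ⟨hfg x, hgf x⟩⟩, ?_, ?_⟩
  · -- the ideal image
    ext x
    constructor
    · rintro ⟨y, hy, rfl⟩
      have : y ∈ TwoSidedIdeal.comap f.toRingHom
          (TwoSidedIdeal.span (srcSet D (l.comp D) ∪ ccrSet G)) := by
        refine TwoSidedIdeal.mem_span_iff.mp hy _ ?_
        intro z hz
        rw [SetLike.mem_coe, TwoSidedIdeal.mem_comap]
        exact TwoSidedIdeal.subset_span (hS z hz)
      rwa [TwoSidedIdeal.mem_comap] at this
    · intro hx
      refine ⟨g x, ?_, hgf x⟩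
      have : x ∈ TwoSidedIdeal.comap g.toRingHom
          (TwoSidedIdeal.span (dynSet D ∪ ccrSet G)) := by
        refine TwoSidedIdeal.mem_span_iff.mp hx _ ?_
        intro z hz
        rw [SetLike.mem_coe, TwoSidedIdeal.mem_comap]
        exact TwoSidedIdeal.subset_span (hT z hz)
      rwa [TwoSidedIdeal.mem_comap] at this
  · -- the descended isomorphism
    have h1 : ∀ ⦃a b : TensorAlgebra ℂ V⦄, relZero G D a b →
        ((RingQuot.mkAlgHom ℂ (relMu G D (l.comp D))).comp f) a
          = ((RingQuot.mkAlgHom ℂ (relMu G D (l.comp D))).comp f) b := by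
      intro a b hab
      apply RingQuot.mkAlgHom_rel
      show f a - f b ∈ _
      rw [← map_sub]
      exact hS _ hab
    have h2 : ∀ ⦃a b : TensorAlgebra ℂ V⦄, relMu G D (l.comp D) a b →
        ((RingQuot.mkAlgHom ℂ (relZero G D)).comp g) a
          = ((RingQuot.mkAlgHom ℂ (relZero G D)).comp g) b := by
      intro a b hab
      apply RingQuot.mkAlgHom_rel
      show g a - g b ∈ _
      rw [← map_sub]
      exact hT _ hab
    set F1 : RingQuot (relZero G D) →ₐ[ℂ] RingQuot (relMu G D (l.comp D)) :=
      RingQuot.liftAlgHom ℂ ⟨(RingQuot.mkAlgHom ℂ (relMu G D (l.comp D))).comp f, h1⟩ with hF1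
    set F2 : RingQuot (relMu G D (l.comp D)) →ₐ[ℂ] RingQuot (relZero G D) :=
      RingQuot.liftAlgHom ℂ ⟨(RingQuot.mkAlgHom ℂ (relZero G D)).comp g, h2⟩ with hF2
    have hF1mk : ∀ x, F1 (RingQuot.mkAlgHom ℂ (relZero G D) x)
        = RingQuot.mkAlgHom ℂ (relMu G D (l.comp D)) (f x) := by
      intro x
      rw [hF1, RingQuot.liftAlgHom_mkAlgHom_apply]
      rfl
    have hF2mk : ∀ x, F2 (RingQuot.mkAlgHom ℂ (relMu G D (l.comp D)) x)
        = RingQuot.mkAlgHom ℂ (relZero G D) (g x) := by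
      intro x
      rw [hF2, RingQuot.liftAlgHom_mkAlgHom_apply]
      rfl
    refine ⟨AlgEquiv.ofAlgHom F1 F2 ?_ ?_, fun x => hF1mk x⟩
    · apply AlgHom.ext
      intro x
      obtain ⟨y, rfl⟩ := RingQuot.mkAlgHom_surjective ℂ (relMu G D (l.comp D)) x
      simp [hF2mk, hF1mk, hgf]
    · apply AlgHom.ext
      intro x
      obtain ⟨y, rfl⟩ := RingQuot.mkAlgHom_surjective ℂ (relZero G D) x
      simp [hF1mk, hF2mk, hfg]
end
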